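/- Let K be a field of characteristic zero, n ≥ 1, d ≥ 0. The family of weighted d-complexes given by the products ∏_{j=2}^{n} ({1} − {j})^{k_j} over all tuples (k₂,…,kₙ) of nonnegative integers with ∑_{j=2}^n k_j = d+1 — equivalently the coefficient-functions of the polynomials ∏_{j=2}^n (x₁ − x_j)^{k_j} viewed as weightings of the complete d-complex Δ_{n,d} — is a basis of the K-vector space of balancings of Δ_{n,d}. In particular this space has dimension C(n+d−1, d+1). -/

import Mathlib

open scoped BigOperators
open MvPolynomial

/-- The multiplicity `m(T ⊆ σ) = ∏ i, C(σ i, T i)` of a multiset `T` in a multiset `σ`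
on `{1, …, n}` (multisets encoded as functions `Fin n → ℕ`). -/
def mult {n : ℕ} (T σ : Fin n → ℕ) : ℕ := ∏ i, (σ i).choose (T i)

/-- The complete `d`-complex `Δ_{n,d}` on `n` vertices: all multisets of cardinality
`d + 1` on `{1,…,n}`. -/
def completeComplex (n d : ℕ) : Finset (Fin n → ℕ) :=
  (Fintype.piFinset fun _ : Fin n => Finset.range (d + 2)).filter
    (fun σ => ∑ i, σ i = d + 1)

/-- The `K`-vector space of balancings of the complete `d`-complex `Δ_{n,d}`. -/
noncomputable def balancingSpace (K : Type*) [Field K] (n d : ℕ) :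
    Submodule K ((Fin n → ℕ) → K) :=
  (⨅ σ : {σ : Fin n → ℕ // σ ∉ completeComplex n d},
      LinearMap.ker (LinearMap.proj σ.1 : ((Fin n → ℕ) → K) →ₗ[K] K)) ⊓
  (⨅ T : {T : Fin n → ℕ // ∑ i, T i ≤ d},
      LinearMap.ker (∑ σ ∈ completeComplex n d, (mult T.1 σ : K) •
        (LinearMap.proj σ : ((Fin n → ℕ) → K) →ₗ[K] K)))

/-- The weighting of `Δ_{n,d}` given by the coefficients of the polynomial
`∏_j (x₁ − x_j)^{k j}` (the exponent vector `k` has `k 1 = 0`, so the factor for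
`j = 1` is trivial); this is the product of the balanced `0`-complexes
`{1} − {j}` with multiplicities `k j`. -/
noncomputable def productWeighting (K : Type*) [Field K] {n : ℕ} (hn : 0 < n)
    (k : Fin n → ℕ) : (Fin n → ℕ) → K := fun σ =>
  MvPolynomial.coeff (Finsupp.equivFunOnFinite.symm σ)
    (∏ j : Fin n, ((X (⟨0, hn⟩ : Fin n) : MvPolynomial (Fin n) K) - X j) ^ (k j))


lemma mem_completeComplex {n d : ℕ} {σ : Fin n → ℕ} :
    σ ∈ completeComplex n d ↔ ∑ i, σ i = d + 1 := by
  constructor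
  · intro h
    exact (Finset.mem_filter.mp h).2
  · intro h
    refine Finset.mem_filter.mpr ⟨?_, h⟩
    refine Fintype.mem_piFinset.mpr fun i => ?_
    refine Finset.mem_range.mpr ?_
    have : σ i ≤ ∑ j, σ j := Finset.single_le_sum (fun j _ => Nat.zero_le _) (Finset.mem_univ i)
    omega

section Aux
variable {n : ℕ} {K : Type*} [Field K]

lemma es_apply (σ : Fin n → ℕ) (i : Fin n) :
    (Finsupp.equivFunOnFinite.symm σ : Fin n →₀ ℕ) i = σ i := rfl

lemma es_degree (σ : Fin n → ℕ) :
    (Finsupp.equivFunOnFinite.symm σ : Fin n →₀ ℕ).degree = ∑ i, σ i := by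
  rw [Finsupp.degree]
  exact Finset.sum_subset (Finset.subset_univ _)
    (fun i _ hi => by simpa using Finsupp.notMem_support_iff.mp hi)

lemma prod_X_pow_univ (p : Fin n → ℕ) :
    ∏ i, (X i : MvPolynomial (Fin n) K) ^ p i
      = monomial (Finsupp.equivFunOnFinite.symm p) 1 := by
  rw [← prod_X_pow_eq_monomial]
  symm
  apply Finset.prod_subset (Finset.subset_univ _)
  intro i _ hi
  have : (Finsupp.equivFunOnFinite.symm p : Fin n →₀ ℕ) i = 0 :=
    Finsupp.notMem_support_iff.mp hi
  simp [es_apply] at this ⊢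
  simp [this]

lemma coeff_prod_add_one (m T : Fin n → ℕ) :
    coeff (Finsupp.equivFunOnFinite.symm T)
      (∏ i, ((X i : MvPolynomial (Fin n) K) + 1) ^ m i)
      = ∏ i, ((m i).choose (T i) : K) := by
  classical
  have expand : ∀ i : Fin n, ((X i : MvPolynomial (Fin n) K) + 1) ^ m i
      = ∑ j ∈ Finset.range (m i + 1),
          C (((m i).choose j : K)) * (X i : MvPolynomial (Fin n) K) ^ j := by
    intro i
    rw [add_pow]
    refine Finset.sum_congr rfl fun j _ => ?_
    rw [one_pow, mul_one, mul_comm]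
    norm_cast
  have step1 : (∏ i, ((X i : MvPolynomial (Fin n) K) + 1) ^ m i)
      = ∑ p ∈ Fintype.piFinset (fun i => Finset.range (m i + 1)),
          ∏ i, C (((m i).choose (p i) : K)) * (X i : MvPolynomial (Fin n) K) ^ p i := by
    simp_rw [expand]
    rw [Finset.prod_univ_sum]
  rw [step1, coeff_sum]
  have step2 : ∀ p : Fin n → ℕ,
      coeff (Finsupp.equivFunOnFinite.symm T)
        (∏ i, C (((m i).choose (p i) : K)) * (X i : MvPolynomial (Fin n) K) ^ p i)
      = if p = T then ∏ i, ((m i).choose (p i) : K) else 0 := by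
    intro p
    rw [Finset.prod_mul_distrib, ← map_prod, prod_X_pow_univ, ← smul_eq_C_mul,
      coeff_smul, coeff_monomial]
    by_cases h : p = T
    · subst h; simp
    · have h2 : (Finsupp.equivFunOnFinite.symm p : Fin n →₀ ℕ)
          ≠ Finsupp.equivFunOnFinite.symm T := by simpa using h
      simp [h2, h]
  simp_rw [step2]
  rw [Finset.sum_ite_eq' (Fintype.piFinset (fun i => Finset.range (m i + 1))) T
    (fun p => ∏ i, ((m i).choose (p i) : K))]
  by_cases hT : T ∈ Fintype.piFinset (fun i => Finset.range (m i + 1))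
  · rw [if_pos hT]
  · rw [if_neg hT]
    symm
    obtain ⟨i, hi⟩ : ∃ i, ¬ T i < m i + 1 := by
      simpa [Fintype.mem_piFinset] using hT
    refine Finset.prod_eq_zero (Finset.mem_univ i) ?_
    have : m i < T i := by omega
    simp [Nat.choose_eq_zero_of_lt this]

lemma coeff_shift (P : MvPolynomial (Fin n) K) (T : Fin n → ℕ) :
    coeff (Finsupp.equivFunOnFinite.symm T)
      (aeval (fun i => (X i : MvPolynomial (Fin n) K) + 1) P)
      = ∑ u ∈ P.support, coeff u P * ∏ i, ((u i).choose (T i) : K) := by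
  conv_lhs => rw [P.as_sum]
  rw [map_sum, coeff_sum]
  refine Finset.sum_congr rfl fun u hu => ?_
  rw [aeval_monomial]
  have hprod : (u.prod fun i k => ((X i : MvPolynomial (Fin n) K) + 1) ^ k)
      = ∏ i, ((X i : MvPolynomial (Fin n) K) + 1) ^ u i :=
    Finsupp.prod_fintype _ _ (fun i => pow_zero _)
  rw [hprod]
  have : (∏ i, ((X i : MvPolynomial (Fin n) K) + 1) ^ u i)
      = ∏ i, ((X i : MvPolynomial (Fin n) K) + 1) ^ (⇑u : Fin n → ℕ) i := rfl
  rw [this]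
  have hcoeff := coeff_prod_add_one (K := K) (⇑u) T
  rw [algebraMap_eq, ← smul_eq_C_mul, coeff_smul, hcoeff]
  rfl

lemma coeff_aeval_zero_at (i0 : Fin n) (P : MvPolynomial (Fin n) K) (σ : Fin n → ℕ)
    (hσ : σ i0 = 0) :
    coeff (Finsupp.equivFunOnFinite.symm σ)
      (aeval (fun i => if i = i0 then 0 else (X i : MvPolynomial (Fin n) K)) P)
      = coeff (Finsupp.equivFunOnFinite.symm σ) P := by
  classical
  conv_lhs => rw [P.as_sum]
  conv_rhs => rw [P.as_sum]
  rw [map_sum, coeff_sum, coeff_sum]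
  refine Finset.sum_congr rfl fun u _ => ?_
  rw [aeval_monomial]
  by_cases hu : u i0 = 0
  · have hprod : (u.prod fun i k =>
        (if i = i0 then 0 else (X i : MvPolynomial (Fin n) K)) ^ k)
        = ∏ i, (if i = i0 then (0 : MvPolynomial (Fin n) K) else X i) ^ u i :=
      Finsupp.prod_fintype _ _ (fun i => pow_zero _)
    have hXprod : (∏ i, (if i = i0 then (0 : MvPolynomial (Fin n) K) else X i) ^ u i)
        = ∏ i, (X i : MvPolynomial (Fin n) K) ^ u i := by
      refine Finset.prod_congr rfl fun i _ => ?_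
      by_cases hi : i = i0
      · subst hi; rw [hu]; simp
      · simp [hi]
    have hmon : (∏ i, (X i : MvPolynomial (Fin n) K) ^ u i)
        = ∏ i, (X i : MvPolynomial (Fin n) K) ^ (⇑u) i := rfl
    have hsymm : (Finsupp.equivFunOnFinite.symm (⇑u) : Fin n →₀ ℕ) = u :=
      Finsupp.equivFunOnFinite.symm_apply_apply u
    rw [hprod, hXprod, hmon, prod_X_pow_univ, hsymm,
      algebraMap_eq, ← smul_eq_C_mul, coeff_smul, coeff_monomial, coeff_monomial]
    simp [smul_eq_mul, mul_comm]
  · have hzero : (u.prod fun i k =>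
        (if i = i0 then 0 else (X i : MvPolynomial (Fin n) K)) ^ k) = 0 := by
      rw [Finsupp.prod_fintype _ _ (fun i => pow_zero _)]
      refine Finset.prod_eq_zero (Finset.mem_univ i0) ?_
      rw [if_pos rfl, zero_pow hu]
    rw [hzero, mul_zero, coeff_zero, coeff_monomial]
    have : u ≠ Finsupp.equivFunOnFinite.symm σ := by
      intro h
      apply hu
      rw [h]
      simpa using hσ
    simp [this]

section PW
variable {d : ℕ} (hn : 0 < n)

lemma homP (k : Fin n → ℕ) (hk : ∑ j, k j = d + 1) :
    (∏ j : Fin n, ((X (⟨0, hn⟩ : Fin n) : MvPolynomial (Fin n) K) - X j) ^ (k j)).IsHomogeneous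
      (d + 1) := by
  rw [← hk]
  refine IsHomogeneous.prod Finset.univ _ k fun j _ => ?_
  have := ((isHomogeneous_X K (⟨0, hn⟩ : Fin n)).sub (isHomogeneous_X K j)).pow (k j)
  rwa [one_mul] at this

lemma pw_zero_of_not_mem (k : Fin n → ℕ) (hk : ∑ j, k j = d + 1) (σ : Fin n → ℕ)
    (hσ : σ ∉ completeComplex n d) : productWeighting K hn k σ = 0 := by
  apply (homP hn k hk).coeff_eq_zero
  rw [es_degree]
  rw [mem_completeComplex] at hσ
  exact hσ

lemma reindex_support (P : MvPolynomial (Fin n) K) (hP : P.IsHomogeneous (d + 1))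
    (f : (Fin n → ℕ) → K) :
    ∑ u ∈ P.support, coeff u P * f ⇑u
      = ∑ σ ∈ completeComplex n d, coeff (Finsupp.equivFunOnFinite.symm σ) P * f σ := by
  classical
  have himg : ∑ σ ∈ completeComplex n d, coeff (Finsupp.equivFunOnFinite.symm σ) P * f σ
      = ∑ u ∈ (completeComplex n d).image (fun σ => (Finsupp.equivFunOnFinite.symm σ : Fin n →₀ ℕ)),
          coeff u P * f ⇑u := by
    rw [Finset.sum_image]
    · refine Finset.sum_congr rfl fun σ _ => ?_
      congr 1
    · intro a _ b _ h
      exact Finsupp.equivFunOnFinite.symm.injective h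
  rw [himg]
  apply Finset.sum_subset
  · intro u hu
    have hc : coeff u P ≠ 0 := mem_support_iff.mp hu
    have hdeg : (Finsupp.degree u) = d + 1 := by
      rw [Finsupp.degree_eq_weight_one]; exact hP hc
    have hsymm : (Finsupp.equivFunOnFinite.symm (⇑u) : Fin n →₀ ℕ) = u :=
      Finsupp.equivFunOnFinite.symm_apply_apply u
    refine Finset.mem_image.mpr ⟨⇑u, ?_, hsymm⟩
    rw [mem_completeComplex, ← es_degree (⇑u), hsymm]
    exact hdeg
  · intro u _ hu
    rw [notMem_support_iff.mp hu, zero_mul]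

lemma pw_balanced (k : Fin n → ℕ) (hk : ∑ j, k j = d + 1) (T : Fin n → ℕ)
    (hT : ∑ i, T i ≤ d) :
    ∑ σ ∈ completeComplex n d, (mult T σ : K) * productWeighting K hn k σ = 0 := by
  set P : MvPolynomial (Fin n) K :=
    ∏ j : Fin n, ((X (⟨0, hn⟩ : Fin n) : MvPolynomial (Fin n) K) - X j) ^ (k j) with hP
  have hinv : aeval (fun i => (X i : MvPolynomial (Fin n) K) + 1) P = P := by
    rw [hP, map_prod]
    refine Finset.prod_congr rfl fun j _ => ?_
    rw [map_pow, map_sub, aeval_X, aeval_X]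
    ring_nf
  have hshift := coeff_shift P T
  rw [hinv] at hshift
  have hzero : coeff (Finsupp.equivFunOnFinite.symm T) P = 0 := by
    apply (homP hn k hk).coeff_eq_zero
    rw [es_degree]
    omega
  have hre := reindex_support P (homP hn k hk) (fun σ => ∏ i, ((σ i).choose (T i) : K))
  rw [hre] at hshift
  rw [hzero] at hshift
  rw [show (0:K) = ∑ σ ∈ completeComplex n d,
      coeff (Finsupp.equivFunOnFinite.symm σ) P * ∏ i : Fin n, (((σ i).choose (T i) : K)) from hshift]
  refine Finset.sum_congr rfl fun σ _ => ?_
  rw [mult, Nat.cast_prod, mul_comm]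
  rfl

lemma pw_diag (k : Fin n → ℕ) (hk0 : k ⟨0, hn⟩ = 0) (hk : ∑ j, k j = d + 1)
    (σ : Fin n → ℕ) (hσ0 : σ ⟨0, hn⟩ = 0) :
    productWeighting K hn k σ = if σ = k then (-1 : K) ^ (d + 1) else 0 := by
  classical
  set i0 : Fin n := ⟨0, hn⟩ with hi0
  set g : Fin n → MvPolynomial (Fin n) K := fun i => if i = i0 then 0 else X i with hg
  set P : MvPolynomial (Fin n) K :=
    ∏ j : Fin n, ((X i0 : MvPolynomial (Fin n) K) - X j) ^ (k j) with hP
  have h1 : productWeighting K hn k σ = coeff (Finsupp.equivFunOnFinite.symm σ) (aeval g P) :=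
    (coeff_aeval_zero_at i0 P σ hσ0).symm
  have h2 : aeval g P = ((-1 : K) ^ (d + 1)) • monomial (Finsupp.equivFunOnFinite.symm k) 1 := by
    rw [hP, map_prod]
    have hfac : ∀ j : Fin n, aeval g (((X i0 : MvPolynomial (Fin n) K) - X j) ^ k j)
        = ((-1 : MvPolynomial (Fin n) K) ^ k j) * (g j) ^ k j := by
      intro j
      rw [map_pow, map_sub, aeval_X, aeval_X]
      have : g i0 = 0 := by simp [hg]
      rw [this, zero_sub, neg_eq_neg_one_mul, mul_pow]
    simp_rw [hfac]
    rw [Finset.prod_mul_distrib, Finset.prod_pow_eq_pow_sum]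
    have hgp : (∏ j, (g j) ^ k j) = ∏ j, (X j : MvPolynomial (Fin n) K) ^ k j := by
      refine Finset.prod_congr rfl fun j _ => ?_
      by_cases hj : j = i0
      · subst hj; rw [hk0]; simp
      · simp [hg, hj]
    rw [hgp]
    have : (∏ j, (X j : MvPolynomial (Fin n) K) ^ k j)
        = ∏ j, (X j : MvPolynomial (Fin n) K) ^ (k : Fin n → ℕ) j := rfl
    rw [this, prod_X_pow_univ, hk]
    rw [smul_eq_C_mul]
    congr 1
    rw [map_pow, map_neg, map_one]
  rw [h1, h2, coeff_smul, coeff_monomial]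
  by_cases h : σ = k
  · subst h; simp
  · have h2 : (Finsupp.equivFunOnFinite.symm k : Fin n →₀ ℕ)
        ≠ Finsupp.equivFunOnFinite.symm σ := by
      simpa using fun hh => h hh.symm
    simp [h2, h]

lemma pw_mem (k : Fin n → ℕ) (hk : ∑ j, k j = d + 1) :
    productWeighting K hn k ∈ balancingSpace K n d := by
  refine Submodule.mem_inf.mpr ⟨?_, ?_⟩
  · refine Submodule.mem_iInf _ |>.mpr fun σ => ?_
    rw [LinearMap.mem_ker]
    exact pw_zero_of_not_mem hn k hk σ.1 σ.2
  · refine Submodule.mem_iInf _ |>.mpr fun T => ?_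
    rw [LinearMap.mem_ker, LinearMap.sum_apply]
    have := pw_balanced (K := K) hn k hk T.1 T.2
    simpa [LinearMap.smul_apply, LinearMap.proj_apply, smul_eq_mul] using this

lemma pw_li :
    LinearIndependent K
      (fun k : {k : Fin n → ℕ // k ⟨0, hn⟩ = 0 ∧ ∑ j, k j = d + 1} =>
        productWeighting K hn k.1) := by
  classical
  rw [linearIndependent_iff']
  intro s g hsum k' hk'
  have heval := congrFun hsum k'.1
  have : ∑ k ∈ s, g k * productWeighting K hn k.1 k'.1 = 0 := by
    simpa [Finset.sum_apply] using heval
  rw [Finset.sum_eq_single_of_mem k' hk'] at this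
  · have hd := pw_diag (K := K) hn k'.1 k'.2.1 k'.2.2 k'.1 k'.2.1
    rw [if_pos rfl] at hd
    rw [hd] at this
    have hne : ((-1 : K) ^ (d + 1)) ≠ 0 := by
      simp
    exact (mul_eq_zero.mp this).resolve_right hne
  · intro k hk hne
    have hd := pw_diag (K := K) hn k.1 k.2.1 k.2.2 k'.1 k'.2.1
    have hne2 : k'.1 ≠ k.1 := fun h => hne (Subtype.ext h).symm
    rw [if_neg hne2] at hd
    rw [hd, mul_zero]

lemma mem_balancing_conditions {w : (Fin n → ℕ) → K} (hw : w ∈ balancingSpace K n d) :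
    (∀ σ, σ ∉ completeComplex n d → w σ = 0) ∧
    (∀ T : Fin n → ℕ, ∑ i, T i ≤ d →
      ∑ σ ∈ completeComplex n d, (mult T σ : K) * w σ = 0) := by
  obtain ⟨h1, h2⟩ := Submodule.mem_inf.mp hw
  constructor
  · intro σ hσ
    have := Submodule.mem_iInf _ |>.mp h1 ⟨σ, hσ⟩
    exact LinearMap.mem_ker.mp this
  · intro T hT
    have := Submodule.mem_iInf _ |>.mp h2 ⟨T, hT⟩
    rw [LinearMap.mem_ker, LinearMap.sum_apply] at this
    simpa [LinearMap.smul_apply, LinearMap.proj_apply, smul_eq_mul] using this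

lemma balancing_eq_zero [CharZero K] {w : (Fin n → ℕ) → K}
    (hw : w ∈ balancingSpace K n d)
    (h0 : ∀ σ, σ ⟨0, hn⟩ = 0 → w σ = 0) : w = 0 := by
  classical
  obtain ⟨hA, hB⟩ := mem_balancing_conditions hw
  set i0 : Fin n := ⟨0, hn⟩ with hi0
  have key : ∀ m : ℕ, ∀ σ : Fin n → ℕ, σ i0 ≤ m → w σ = 0 := by
    intro m
    induction m with
    | zero => intro σ hσ; exact h0 σ (Nat.le_zero.mp hσ)
    | succ m ih =>
      intro σ hσ
      by_cases hm : σ i0 ≤ m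
      · exact ih σ hm
      have hσ0 : σ i0 = m + 1 := by omega
      by_cases hmem : σ ∈ completeComplex n d
      swap
      · exact hA σ hmem
      have hsum : ∑ i, σ i = d + 1 := mem_completeComplex.mp hmem
      set T : Fin n → ℕ := Function.update σ i0 m with hTdef
      have hTi0 : T i0 = m := by simp [hTdef]
      have hTne : ∀ i, i ≠ i0 → T i = σ i := fun i hi => Function.update_of_ne hi _ _
      have hTsum : ∑ i, T i ≤ d := by
        have h1 : ∑ i, T i = m + ∑ i ∈ Finset.univ.erase i0, T i := by
          rw [← Finset.add_sum_erase _ T (Finset.mem_univ i0), hTi0]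
        have h2 : ∑ i, σ i = (m + 1) + ∑ i ∈ Finset.univ.erase i0, σ i := by
          rw [← Finset.add_sum_erase _ σ (Finset.mem_univ i0), hσ0]
        have h3 : ∑ i ∈ Finset.univ.erase i0, T i = ∑ i ∈ Finset.univ.erase i0, σ i :=
          Finset.sum_congr rfl fun i hi => hTne i (Finset.ne_of_mem_erase hi)
        omega
      have hcond := hB T hTsum
      rw [Finset.sum_eq_single_of_mem σ hmem] at hcond
      · have hmult : mult T σ = m + 1 := by
          rw [mult]
          rw [Finset.prod_eq_single_of_mem i0 (Finset.mem_univ i0)]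
          · rw [hTi0, hσ0]
            exact Nat.choose_succ_self_right m
          · intro i _ hi
            rw [hTne i hi, Nat.choose_self]
        rw [hmult] at hcond
        have hne : ((m + 1 : ℕ) : K) ≠ 0 := Nat.cast_ne_zero.mpr (Nat.succ_ne_zero m)
        exact (mul_eq_zero.mp hcond).resolve_left hne
      · intro σ' hmem' hne'
        by_cases hle : ∀ i, T i ≤ σ' i
        · by_cases hle0 : σ i0 ≤ σ' i0
          · exfalso
            have hge : ∀ i, σ i ≤ σ' i := by
              intro i
              by_cases hi : i = i0
              · subst hi; exact hle0
              · rw [← hTne i hi]; exact hle i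
            have hsum' : ∑ i, σ' i = d + 1 := mem_completeComplex.mp hmem'
            have : σ' = σ := by
              funext i
              by_contra hci
              have hlt : σ i < σ' i := lt_of_le_of_ne (hge i) (fun h => hci h.symm)
              have : ∑ i, σ i < ∑ i, σ' i :=
                Finset.sum_lt_sum (fun i _ => hge i) ⟨i, Finset.mem_univ i, hlt⟩
              omega
            exact hne' this
          · have : σ' i0 ≤ m := by omega
            rw [ih σ' this, mul_zero]
        · push_neg at hle
          obtain ⟨i, hi⟩ := hle
          have : mult T σ' = 0 := by
            rw [mult]
            refine Finset.prod_eq_zero (Finset.mem_univ i) ?_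
            exact Nat.choose_eq_zero_of_lt hi
          rw [this, Nat.cast_zero, zero_mul]
  funext σ
  exact key (σ i0) σ le_rfl

end PW

section Span
variable {d : ℕ} (hn : 0 < n)

lemma pw_span [CharZero K] :
    Submodule.span K
        (Set.range (fun k : {k : Fin n → ℕ // k ⟨0, hn⟩ = 0 ∧ ∑ j, k j = d + 1} =>
          productWeighting K hn k.1))
      = balancingSpace K n d := by
  classical
  apply le_antisymm
  · rw [Submodule.span_le]
    rintro - ⟨k, rfl⟩
    exact pw_mem hn k.1 k.2.2
  · intro w hw
    set i0 : Fin n := ⟨0, hn⟩ with hi0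
    set F : Finset (Fin n → ℕ) := (completeComplex n d).filter (fun k => k i0 = 0) with hF
    have hFmem : ∀ k ∈ F, k i0 = 0 ∧ ∑ j, k j = d + 1 := by
      intro k hk
      obtain ⟨h1, h2⟩ := Finset.mem_filter.mp hk
      exact ⟨h2, mem_completeComplex.mp h1⟩
    set u : (Fin n → ℕ) → K :=
      ∑ k ∈ F, ((-1 : K) ^ (d + 1) * w k) • productWeighting K hn k with hu
    have hspan : u ∈ Submodule.span K
        (Set.range (fun k : {k : Fin n → ℕ // k ⟨0, hn⟩ = 0 ∧ ∑ j, k j = d + 1} =>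
          productWeighting K hn k.1)) := by
      refine Submodule.sum_mem _ fun k hk => Submodule.smul_mem _ _ ?_
      exact Submodule.subset_span ⟨⟨k, hFmem k hk⟩, rfl⟩
    have hubal : u ∈ balancingSpace K n d :=
      Submodule.sum_mem _ fun k hk => Submodule.smul_mem _ _ (pw_mem hn k (hFmem k hk).2)
    have hdiff : w - u ∈ balancingSpace K n d := Submodule.sub_mem _ hw hubal
    obtain ⟨hA, _⟩ := mem_balancing_conditions hw
    have hsq : ((-1 : K) ^ (d + 1)) * ((-1 : K) ^ (d + 1)) = 1 := by
      rw [← mul_pow]; norm_num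
    have hzero_at : ∀ σ, σ i0 = 0 → (w - u) σ = 0 := by
      intro σ hσ0
      have huσ : u σ = ∑ k ∈ F, ((-1 : K) ^ (d + 1) * w k) * productWeighting K hn k σ := by
        rw [hu, Finset.sum_apply]
        exact Finset.sum_congr rfl fun k _ => rfl
      by_cases hmem : σ ∈ completeComplex n d
      · have hσF : σ ∈ F := Finset.mem_filter.mpr ⟨hmem, hσ0⟩
        rw [Pi.sub_apply, huσ, Finset.sum_eq_single_of_mem σ hσF]
        · have hd := pw_diag (K := K) hn σ hσ0 (mem_completeComplex.mp hmem) σ hσ0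
          rw [if_pos rfl] at hd
          rw [hd]
          have : (-1 : K) ^ (d + 1) * w σ * (-1 : K) ^ (d + 1) = w σ := by
            calc (-1 : K) ^ (d + 1) * w σ * (-1 : K) ^ (d + 1)
                = ((-1 : K) ^ (d + 1) * (-1 : K) ^ (d + 1)) * w σ := by ring
              _ = w σ := by rw [hsq, one_mul]
          rw [this, sub_self]
        · intro k hk hne
          obtain ⟨hk0, hksum⟩ := hFmem k hk
          have hd := pw_diag (K := K) hn k hk0 hksum σ hσ0
          rw [if_neg (fun h => hne h.symm)] at hd
          rw [hd, mul_zero]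
      · rw [Pi.sub_apply, hA σ hmem, huσ]
        rw [Finset.sum_eq_zero, sub_zero]
        intro k hk
        rw [pw_zero_of_not_mem hn k (hFmem k hk).2 σ hmem, mul_zero]
    have : w - u = 0 := balancing_eq_zero hn hdiff hzero_at
    have hwu : w = u := by
      have := sub_eq_zero.mp this
      exact this
    rw [hwu]
    exact hspan

end Span

end Aux

lemma degree_symm {α : Type*} [Fintype α] (σ : α → ℕ) :
    (Finsupp.equivFunOnFinite.symm σ : α →₀ ℕ).degree = ∑ i, σ i := by
  rw [Finsupp.degree]
  exact Finset.sum_subset (Finset.subset_univ _)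
    (fun i _ hi => by simpa using Finsupp.notMem_support_iff.mp hi)

noncomputable def sumEquivSym (α : Type*) [Fintype α] [DecidableEq α] (N : ℕ) :
    {g : α → ℕ // ∑ j, g j = N} ≃ Sym α N := by
  have e1 : {g : α → ℕ // ∑ j, g j = N} ≃ {h : α →₀ ℕ // h.degree = N} :=
    Finsupp.equivFunOnFinite.symm.subtypeEquiv (fun g => by rw [degree_symm])
  have e2 : {h : α →₀ ℕ // h.degree = N} ≃ {m : Multiset α // Multiset.card m = N} :=
    (Finsupp.orderIsoMultiset (ι := α)).toEquiv.subtypeEquiv (fun h => by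
      have hc : (Finsupp.orderIsoMultiset (ι := α)).toEquiv h = Finsupp.toMultiset h := rfl
      rw [hc, Finsupp.card_toMultiset]
      rfl)
  have e3 : {m : Multiset α // Multiset.card m = N} ≃ Sym α N := Equiv.refl _
  exact (e1.trans e2).trans e3


lemma sum_split {n : ℕ} (i0 : Fin n) (k : Fin n → ℕ) :
    ∑ j, k j = k i0 + ∑ j : {j : Fin n // j ≠ i0}, k j.1 := by
  rw [← Finset.add_sum_erase _ k (Finset.mem_univ i0)]
  congr 1
  exact Finset.sum_subtype _ (fun x => by simp) k

noncomputable def idxEquiv (n d : ℕ) (hn : 0 < n) :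
    {k : Fin n → ℕ // k ⟨0, hn⟩ = 0 ∧ ∑ j, k j = d + 1}
      ≃ {g : {j : Fin n // j ≠ ⟨0, hn⟩} → ℕ // ∑ j, g j = d + 1} where
  toFun k := ⟨fun j => k.1 j.1, by
    have := sum_split (⟨0, hn⟩ : Fin n) k.1
    rw [k.2.1, zero_add] at this
    rw [← this, k.2.2]⟩
  invFun g := ⟨fun j => if h : j = ⟨0, hn⟩ then 0 else g.1 ⟨j, h⟩, by
    constructor
    · exact dif_pos rfl
    · rw [sum_split (⟨0, hn⟩ : Fin n), dif_pos rfl, zero_add]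
      refine Eq.trans ?_ g.2
      exact Finset.sum_congr rfl fun j _ => dif_neg j.2⟩
  left_inv k := by
    ext j
    by_cases h : j = ⟨0, hn⟩
    · subst h; simp [k.2.1]
    · simp [h]
  right_inv g := by
    ext j
    simp [j.2]

lemma idx_card (n d : ℕ) (hn : 0 < n)
    [Fintype {k : Fin n → ℕ // k ⟨0, hn⟩ = 0 ∧ ∑ j, k j = d + 1}] :
    Fintype.card {k : Fin n → ℕ // k ⟨0, hn⟩ = 0 ∧ ∑ j, k j = d + 1}
      = (n + d - 1).choose (d + 1) := by
  classical
  rw [Fintype.card_congr ((idxEquiv n d hn).trans (sumEquivSym _ (d + 1)))]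
  rw [Sym.card_sym_eq_choose]
  have hcard : Fintype.card {j : Fin n // j ≠ ⟨0, hn⟩} = n - 1 := by
    rw [Fintype.card_subtype_compl]
    simp
  rw [hcard]
  congr 1
  omega

/-- Over a characteristic-zero field `K`, the weighted complexes
`∏_{j=2}^{n} ({1} − {j})^{k_j}`, over all tuples of nonnegative integers with
`∑ k_j = d + 1`, form a basis of the space of balancings of the complete `d`-complex
`Δ_{n,d}`; in particular this space has dimension `C(n+d−1, d+1)`. -/
theorem complete_complex_balancing_basis (K : Type*) [Field K] [CharZero K]
    (n d : ℕ) (hn : 0 < n) :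
    (LinearIndependent K
      (fun k : {k : Fin n → ℕ // k ⟨0, hn⟩ = 0 ∧ ∑ j, k j = d + 1} =>
        productWeighting K hn k.1)
    ∧ Submodule.span K
        (Set.range (fun k : {k : Fin n → ℕ // k ⟨0, hn⟩ = 0 ∧ ∑ j, k j = d + 1} =>
          productWeighting K hn k.1))
        = balancingSpace K n d
    ∧ Module.finrank K (balancingSpace K n d) = (n + d - 1).choose (d + 1)) := by
  classical
  set i0 : Fin n := ⟨0, hn⟩ with hi0
  haveI : Fintype {k : Fin n → ℕ // k ⟨0, hn⟩ = 0 ∧ ∑ j, k j = d + 1} :=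
    Fintype.ofFinset ((completeComplex n d).filter (fun k => k ⟨0, hn⟩ = 0)) (by
      intro k
      rw [Finset.mem_filter, mem_completeComplex]
      exact ⟨fun h => ⟨h.2, h.1⟩, fun h => ⟨h.2, h.1⟩⟩)
  have hli := pw_li (K := K) (d := d) hn
  have hspan := pw_span (K := K) (d := d) hn
  refine ⟨hli, hspan, ?_⟩
  set S := balancingSpace K n d with hS
  set f : {k : Fin n → ℕ // k ⟨0, hn⟩ = 0 ∧ ∑ j, k j = d + 1} → ((Fin n → ℕ) → K) :=
    fun k => productWeighting K hn k.1 with hf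
  set fS : {k : Fin n → ℕ // k ⟨0, hn⟩ = 0 ∧ ∑ j, k j = d + 1} → S :=
    fun k => ⟨f k, pw_mem hn k.1 k.2.2⟩ with hfS
  have hli' : LinearIndependent K fS := by
    apply LinearIndependent.of_comp S.subtype
    exact hli
  have hmap : Submodule.map S.subtype (Submodule.span K (Set.range fS))
      = Submodule.span K (Set.range f) := by
    rw [Submodule.map_span]
    congr 1
    rw [← Set.range_comp]
    rfl
  have htop : Submodule.span K (Set.range fS) = ⊤ := by
    apply Submodule.map_injective_of_injective S.injective_subtype
    rw [hmap, Submodule.map_top, Submodule.range_subtype]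
    exact hspan
  have b : Module.Basis {k : Fin n → ℕ // k ⟨0, hn⟩ = 0 ∧ ∑ j, k j = d + 1} K S :=
    Module.Basis.mk hli' (le_of_eq htop.symm)
  rw [Module.finrank_eq_card_basis b]
  exact idx_card n d hn
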